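/- Let k be a field of characteristic p, where p ≥ 3 is a prime, L a Lie algebra over k, M a k-vector space, and φ : L → End_k(M) a k-linear Lie algebra homomorphism. Fix x, y ∈ L and v, w ∈ M, and define sequences (y_n) in L and (m_n) in M by y_0 = y, m_0 = w, y_{n+1} = [x, y_n], and m_{n+1} = φ(x)(m_n) − φ(y_n)(v). Then m_p = φ(x)^p(w) − φ(y)( φ(x)^{p-1}(v) ) and y_p = (ad x)^p(y). -/

import Mathlib

open Finset LinearMap

attribute [local instance 100] LieRing.ofAssociativeRing

/-- In characteristic `p ≥ 3`, the `p`-th iterated adjoint action in the semidirect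
product `L ⋉ M` satisfies `m_p = φ(x)^p w − φ(y) (φ(x)^{p-1} v)` and `y_p = (ad x)^p y`. -/
theorem stmt3 {k : Type*} [Field k] {p : ℕ} (hp : p.Prime) (hp3 : 3 ≤ p) [CharP k p]
    {L : Type*} [LieRing L] [LieAlgebra k L]
    {M : Type*} [AddCommGroup M] [Module k M]
    (φ : L →ₗ⁅k⁆ Module.End k M)
    (x y : L) (v w : M) (ys : ℕ → L) (ms : ℕ → M)
    (hy0 : ys 0 = y) (hm0 : ms 0 = w)
    (hys : ∀ n, ys (n + 1) = ⁅x, ys n⁆)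
    (hms : ∀ n, ms (n + 1) = φ x (ms n) - φ (ys n) v) :
    ms p = (φ x ^ p) w - φ y ((φ x ^ (p - 1)) v) ∧
      ys p = (LieAlgebra.ad k L x ^ p) y := by
  classical
  set a : Module.End k M := φ x with ha
  set b : Module.End k M := φ y with hb
  -- the adjoint part
  have hyn : ∀ n, ys n = ((LieAlgebra.ad k L x) ^ n) y := by
    intro n
    induction n with
    | zero => simpa using hy0
    | succ n ih =>
      rw [hys, ih, pow_succ', Module.End.mul_apply, LieAlgebra.ad_apply]
  -- the sequence `φ (ys n)` is given by iterating `z ↦ a * z - z * a`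
  have hcn : ∀ n, φ (ys n) = ((mulLeft k a - mulRight k a) ^ n) b := by
    intro n
    induction n with
    | zero => simp [hy0, hb]
    | succ n ih =>
      rw [hys, LieHom.map_lie, ih, pow_succ', Module.End.mul_apply]
      simp [Ring.lie_def, ha]
  -- expand via the binomial theorem for the commuting operators `-mulRight a` and `mulLeft a`
  have hcomm : Commute (-mulRight k a) (mulLeft k a) :=
    ((LinearMap.commute_mulLeft_right (R := k) a a).symm).neg_left
  have hcval : ∀ n, φ (ys n) =
      ∑ m ∈ range (n + 1), (n.choose m) • (a ^ (n - m) * b * (-a) ^ m) := by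
    intro n
    have h1 : mulLeft k a - mulRight k a = -mulRight k a + mulLeft k a := by
      rw [neg_add_eq_sub]
    rw [hcn, h1, hcomm.add_pow, LinearMap.sum_apply]
    refine Finset.sum_congr rfl fun m hm => ?_
    have h2 : -mulRight k a = mulRight k (-a) := by ext z; simp
    rw [h2, pow_mulRight, pow_mulLeft, Module.End.mul_apply, Module.End.mul_apply,
      Module.End.natCast_apply, mulLeft_apply, mulRight_apply]
    rw [mul_smul_comm, smul_mul_assoc]
  -- the main induction: closed form for `ms n`
  have hmn : ∀ n, ms n = (a ^ n) w -
      (∑ j ∈ range n, (n.choose (j + 1)) • (a ^ (n - 1 - j) * b * (-a) ^ j)) v := by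
    intro n
    induction n with
    | zero => simp [hm0]
    | succ n ih =>
      have key : (∑ j ∈ range (n + 1), ((n + 1).choose (j + 1)) •
            (a ^ (n + 1 - 1 - j) * b * (-a) ^ j)) =
          a * (∑ j ∈ range n, (n.choose (j + 1)) • (a ^ (n - 1 - j) * b * (-a) ^ j)) +
            ∑ m ∈ range (n + 1), (n.choose m) • (a ^ (n - m) * b * (-a) ^ m) := by
        have e1 : a * (∑ j ∈ range n, (n.choose (j + 1)) • (a ^ (n - 1 - j) * b * (-a) ^ j)) =
            ∑ j ∈ range (n + 1), (n.choose (j + 1)) • (a ^ (n - j) * b * (-a) ^ j) := by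
          rw [Finset.mul_sum, Finset.sum_range_succ, Nat.choose_succ_self, zero_smul, add_zero]
          refine Finset.sum_congr rfl fun j hj => ?_
          rw [Finset.mem_range] at hj
          rw [mul_smul_comm, ← mul_assoc, ← mul_assoc, ← pow_succ',
            show n - 1 - j + 1 = n - j from by omega]
        rw [e1, ← Finset.sum_add_distrib]
        refine Finset.sum_congr rfl fun j hj => ?_
        have hch : (n + 1).choose (j + 1) = n.choose (j + 1) + n.choose j := by
          rw [Nat.choose_succ_succ]; ring
        rw [show n + 1 - 1 - j = n - j from by omega, hch, add_smul]
      rw [hms n, ih, hcval n, key, map_sub, LinearMap.add_apply,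
        Module.End.mul_apply, ← Module.End.mul_apply a (a ^ n), ← pow_succ']
      abel
  refine ⟨?_, hyn p⟩
  have hUp : (∑ j ∈ range p, (p.choose (j + 1)) • (a ^ (p - 1 - j) * b * (-a) ^ j)) =
      b * a ^ (p - 1) := by
    rw [Finset.sum_eq_single (p - 1)]
    · have h1 : p.choose (p - 1 + 1) = 1 := by
        rw [show p - 1 + 1 = p by omega, Nat.choose_self]
      rw [h1, one_smul, Nat.sub_self, pow_zero, one_mul]
      congr 1
      have hev : Even (p - 1) := Nat.Odd.sub_odd (hp.odd_of_ne_two (by omega)) odd_one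
      exact hev.neg_pow a
    · intro j hj hne
      rw [Finset.mem_range] at hj
      have hd : p ∣ p.choose (j + 1) := hp.dvd_choose_self (by omega) (by omega)
      rw [← Nat.cast_smul_eq_nsmul k, (CharP.cast_eq_zero_iff k p _).mpr hd, zero_smul]
    · intro h; exact absurd (Finset.mem_range.mpr (by omega)) h
  rw [hmn p, hUp, Module.End.mul_apply]
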